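/- (Equilibrium magnetization in the microcanonical ensemble) For e ∈ [e₋, e₊], let P_e^N := (1/Z_e^N) Σ P_{ε_1}⊗…⊗P_{ε_N}, the sum over all (ε_1,…,ε_N) ∈ {e₊,e₋}^N with Ne ≤ Σ_j ε_j < e₊ − e₋ + Ne, and Z_e^N the normalization making Tr[P_e^N] = 1. Then the limit m⃗_e := lim_{N→∞} (1/N)(Tr[P_e^N M_N^x], Tr[P_e^N M_N^y], Tr[P_e^N M_N^z]) exists and equals e h⃗/h². -/

import Mathlib

open scoped BigOperators
open Matrix Filter
open scoped ComplexOrder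

noncomputable section

/-- 2×2 complex matrices: single-site operators. -/
abbrev Mat2 := Matrix (Fin 2) (Fin 2) ℂ

/-- Operators on the `N`-site Hilbert space `⊗_{j=1}^N ℂ²`, identified with
matrices indexed by configurations `Fin N → Fin 2`. -/
abbrev MatN (N : ℕ) := Matrix (Fin N → Fin 2) (Fin N → Fin 2) ℂ

/-- Pauli matrices. -/
def σx : Mat2 := !![0, 1; 1, 0]
def σy : Mat2 := !![0, -Complex.I; Complex.I, 0]
def σz : Mat2 := !![1, 0; 0, -1]
def pauli : Fin 3 → Mat2 := ![σx, σy, σz]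

/-- `m⃗ · σ⃗` for a real vector `m⃗ ∈ ℝ³`. -/
def dotPauli (m : Fin 3 → ℝ) : Mat2 := ∑ i, (m i : ℂ) • pauli i

/-- Euclidean norm on ℝ³. -/
def norm3 (v : Fin 3 → ℝ) : ℝ := Real.sqrt (∑ i, (v i) ^ 2)

/-- dot product on ℝ³. -/
def dot3 (u v : Fin 3 → ℝ) : ℝ := ∑ i, u i * v i

/-- tensor product `⊗_j B j` of single-site matrices. -/
def tens {N : ℕ} (B : Fin N → Mat2) : MatN N := fun η η' => ∏ j, B j (η j) (η' j)

/-- `B_j = 𝟙 ⊗ ⋯ ⊗ B ⊗ ⋯ ⊗ 𝟙` with `B` at site `j`. -/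
def site (N : ℕ) (j : Fin N) (B : Mat2) : MatN N :=
  tens (Function.update (fun _ => (1 : Mat2)) j B)

/-- `B_N = ∑_j B_j`. -/
def sumSite (N : ℕ) (B : Mat2) : MatN N := ∑ j, site N j B

/-- partial trace onto site `j` (reduced density matrix at site `j`). -/
def ptrace {N : ℕ} (j : Fin N) (ρ : MatN N) : Mat2 :=
  fun a b => ∑ η : Fin N → Fin 2, if η j = a then ρ η (Function.update η j b) else 0

/-- functional calculus `f(M)` for a Hermitian matrix `M` (junk value `0` otherwise). -/
def matFun {n : Type*} [Fintype n] [DecidableEq n] (f : ℝ → ℝ) (M : Matrix n n ℂ) :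
    Matrix n n ℂ :=
  if hM : M.IsHermitian then
    (hM.eigenvectorUnitary : Matrix n n ℂ) *
      Matrix.diagonal (fun i => (f (hM.eigenvalues i) : ℂ)) *
        (hM.eigenvectorUnitary : Matrix n n ℂ)ᴴ
  else 0

/-- `k_j(ε,t) = ∑_{n=1}^t ε_{(j-n) mod N}`. -/
def kSteps (N t : ℕ) (ε : Fin N → Fin 2) (j : Fin N) : ℕ :=
  ∑ n ∈ Finset.Icc 1 t, (ε ⟨((j : ℕ) + n * (N - 1)) % N, Nat.mod_lt _ j.pos⟩ : ℕ)

/-- the unitary dynamics `U_N(t,ε) = ⊗_j U^{k_j(ε,t)}`. -/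
def UN (U : Mat2) (N t : ℕ) (ε : Fin N → Fin 2) : MatN N :=
  tens (fun j => U ^ kSteps N t ε j)

/-- the set `Ω_μ^N` of scatterer configurations with `⌈μN⌉` active scatterers. -/
def OmegaSet (N : ℕ) (μ : ℝ) : Finset (Fin N → Fin 2) :=
  Finset.univ.filter (fun ε => (∑ j, (ε j : ℕ)) = Nat.ceil (μ * N))

/-- expectation `E_μ^N` with respect to the uniform probability on `Ω_μ^N`. -/
def epsAvg (N : ℕ) (μ : ℝ) (g : (Fin N → Fin 2) → ℝ) : ℝ :=
  (∑ ε ∈ OmegaSet N μ, g ε) / (OmegaSet N μ).card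

/-- the single site Hamiltonian `H = h⃗ · σ⃗`. -/
def Hmat (hv : Fin 3 → ℝ) : Mat2 := dotPauli hv

/-- `U = exp(iH)`. -/
def Umat (hv : Fin 3 → ℝ) : Mat2 := NormedSpace.exp (Complex.I • Hmat hv)

/-- `z = 1 - μ + μ e^{i(e₊ - e₋)}` with `e₊ - e₋ = 2h`. -/
def zfac (h μ : ℝ) : ℂ := 1 - μ + μ * Complex.exp (Complex.I * (2 * h))

/-- the magnetization `m⃗_t = m⃗_e + Re[(m⃗_0 - m⃗_e + i(h⃗ × m⃗_0)/h) z^t]`, with `m⃗_e = e h⃗/h²`. -/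
def mVec (hv m0 : Fin 3 → ℝ) (e μ : ℝ) (t : ℕ) (i : Fin 3) : ℝ :=
  e * hv i / (norm3 hv) ^ 2 +
    (((m0 i - e * hv i / (norm3 hv) ^ 2 : ℝ) +
        Complex.I * ((crossProduct hv m0) i / norm3 hv)) *
      (zfac (norm3 hv) μ) ^ t).re

/-- the Heisenberg-picture effective map `Γ(A) = (1-μ)A + μ U* A U`. -/
def Gam (U : Mat2) (μ : ℝ) (A : Mat2) : Mat2 := (1 - μ) • A + μ • (Uᴴ * A * U)

/-- the Schrödinger-picture effective map `Γ*(ν) = (1-μ)ν + μ U ν U*`. -/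
def GamS (U : Mat2) (μ : ℝ) (ν : Mat2) : Mat2 := (1 - μ) • ν + μ • (U * ν * Uᴴ)

/-- the density matrix with Bloch vector `m⃗`: `(𝟙 + m⃗·σ⃗)/2`. -/
def bloch (m : Fin 3 → ℝ) : Mat2 := (2 : ℂ)⁻¹ • (1 + dotPauli m)


open scoped Classical in
/-- the microcanonical projector `P_e^N`, normalized so that `Tr[P_e^N] = 1`:
`(1/Z_e^N) ∑ P_{ε₁} ⊗ ⋯ ⊗ P_{ε_N}`, the sum over `(ε_j) ∈ {e₊,e₋}^N`
with `N e ≤ ∑_j ε_j < e₊ − e₋ + N e`, where `P_{e₊} = (𝟙 + H/h)/2`, `P_{e₋} = (𝟙 − H/h)/2`. -/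
def microState (N : ℕ) (hv : Fin 3 → ℝ) (e : ℝ) : MatN N :=
  let h := norm3 hv
  let Pp : Mat2 := (2 : ℂ)⁻¹ • (1 + (h : ℂ)⁻¹ • Hmat hv)
  let Pm : Mat2 := (2 : ℂ)⁻¹ • (1 - (h : ℂ)⁻¹ • Hmat hv)
  let S : Finset (Fin N → Fin 2) := Finset.univ.filter (fun ε =>
    (N : ℝ) * e ≤ (∑ j, if ε j = 1 then h else -h) ∧
      (∑ j, if ε j = 1 then h else -h) < 2 * h + N * e)
  (Matrix.trace (∑ ε ∈ S, tens (fun j => if ε j = 1 then Pp else Pm)))⁻¹ •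
    ∑ ε ∈ S, tens (fun j => if ε j = 1 then Pp else Pm)

lemma tens_mul {N : ℕ} (B C : Fin N → Mat2) : tens B * tens C = tens (fun j => B j * C j) := by
  ext η η''
  simp only [tens, Matrix.mul_apply]
  rw [Fintype.prod_sum]
  exact Finset.sum_congr rfl fun g _ => (Finset.prod_mul_distrib).symm

lemma trace_tens {N : ℕ} (B : Fin N → Mat2) : (tens B).trace = ∏ j, (B j).trace := by
  simp only [Matrix.trace, Matrix.diag, tens]
  rw [Fintype.prod_sum]

lemma trace_pauli (i : Fin 3) : (pauli i).trace = 0 := by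
  fin_cases i <;> simp [pauli, σx, σy, σz, Matrix.trace_fin_two_of]

lemma trace_pauli_mul (i j : Fin 3) : (pauli i * pauli j).trace = if i = j then 2 else 0 := by
  fin_cases i <;> fin_cases j <;>
    simp [pauli, σx, σy, σz, Matrix.mul_fin_two, Matrix.trace_fin_two_of, Complex.I_mul_I] <;> ring_nf <;>
    simp [Complex.I_sq]

lemma trace_Hmat (hv : Fin 3 → ℝ) : (Hmat hv).trace = 0 := by
  simp [Hmat, dotPauli, Matrix.trace_sum, trace_pauli]

lemma trace_Hmat_pauli (hv : Fin 3 → ℝ) (α : Fin 3) :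
    (Hmat hv * pauli α).trace = 2 * hv α := by
  simp only [Hmat, dotPauli, Finset.sum_mul, smul_mul_assoc, Matrix.trace_sum,
    Matrix.trace_smul, trace_pauli_mul, smul_eq_mul, mul_ite, mul_zero, mul_one]
  rw [Finset.sum_ite_eq' Finset.univ α fun i => ((hv i : ℂ) * 2)]
  simp [mul_comm]

lemma trace_tens_mul_site {N : ℕ} (P : Fin N → Mat2) (hP : ∀ k, (P k).trace = 1)
    (j : Fin N) (A : Mat2) : (tens P * site N j A).trace = (P j * A).trace := by
  rw [site, tens_mul]
  have h1 : (fun k => P k * Function.update (fun _ => (1 : Mat2)) j A k)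
      = Function.update P j (P j * A) := by
    funext k
    by_cases hk : k = j
    · subst hk; simp
    · simp [Function.update_of_ne hk]
  rw [h1, trace_tens]
  have h2 : (fun k => (Function.update P j (P j * A) k).trace)
      = Function.update (fun k => (P k).trace) j (P j * A).trace := by
    funext k
    exact Function.apply_update (fun _ m => Matrix.trace m) P j (P j * A) k
  rw [h2, Finset.prod_update_of_mem (Finset.mem_univ j)]
  rw [Finset.prod_congr rfl fun k _ => hP k]
  simp

lemma trace_tens_mul_sumSite {N : ℕ} (P : Fin N → Mat2) (hP : ∀ k, (P k).trace = 1)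
    (A : Mat2) : (tens P * sumSite N A).trace = ∑ j, (P j * A).trace := by
  rw [sumSite, Finset.mul_sum, Matrix.trace_sum]
  exact Finset.sum_congr rfl fun j _ => trace_tens_mul_site P hP j A


lemma tr_Pp (hv : Fin 3 → ℝ) (s : ℝ) :
    ((2 : ℂ)⁻¹ • (1 + (s : ℂ)⁻¹ • Hmat hv)).trace = 1 := by
  simp [Matrix.trace_smul, Matrix.trace_add, Matrix.trace_one, trace_Hmat]

lemma tr_Pm (hv : Fin 3 → ℝ) (s : ℝ) :
    ((2 : ℂ)⁻¹ • (1 - (s : ℂ)⁻¹ • Hmat hv)).trace = 1 := by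
  simp [Matrix.trace_smul, Matrix.trace_sub, Matrix.trace_one, trace_Hmat]

lemma tr_Pp_pauli (hv : Fin 3 → ℝ) (s : ℝ) (α : Fin 3) :
    (((2 : ℂ)⁻¹ • (1 + (s : ℂ)⁻¹ • Hmat hv)) * pauli α).trace = ((hv α / s : ℝ) : ℂ) := by
  simp only [Matrix.smul_mul, Matrix.add_mul, Matrix.one_mul, Matrix.trace_smul,
    Matrix.trace_add, trace_pauli, trace_Hmat_pauli, smul_eq_mul]
  push_cast
  ring

lemma tr_Pm_pauli (hv : Fin 3 → ℝ) (s : ℝ) (α : Fin 3) :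
    (((2 : ℂ)⁻¹ • (1 - (s : ℂ)⁻¹ • Hmat hv)) * pauli α).trace = -((hv α / s : ℝ) : ℂ) := by
  simp only [Matrix.smul_mul, Matrix.sub_mul, Matrix.one_mul, Matrix.trace_smul,
    Matrix.trace_sub, trace_pauli, trace_Hmat_pauli, smul_eq_mul]
  push_cast
  ring

lemma abstract_calc {N : ℕ} (Pp Pm : Mat2) (hPp : Pp.trace = 1) (hPm : Pm.trace = 1)
    (A : Mat2) (S : Finset (Fin N → Fin 2)) (c : ℂ)
    (hS : ∀ ε ∈ S, ∑ j, ((if ε j = 1 then Pp else Pm) * A).trace = c)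
    (hne : S.Nonempty) :
    ((∑ ε ∈ S, tens fun j => if ε j = 1 then Pp else Pm).trace⁻¹ •
      (∑ ε ∈ S, tens fun j => if ε j = 1 then Pp else Pm) * sumSite N A).trace = c := by
  have htr1 : ∀ ε : Fin N → Fin 2,
      (tens fun j => if ε j = 1 then Pp else Pm).trace = 1 := by
    intro ε; rw [trace_tens]
    apply Finset.prod_eq_one
    intro j _
    by_cases hj : ε j = 1 <;> simp [hj, hPp, hPm]
  have hZ : (∑ ε ∈ S, tens fun j => if ε j = 1 then Pp else Pm).trace = (S.card : ℂ) := by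
    rw [Matrix.trace_sum]; simp [htr1]
  rw [Matrix.smul_mul, Matrix.trace_smul, smul_eq_mul, hZ, Finset.sum_mul, Matrix.trace_sum]
  have hterm : ∑ ε ∈ S, ((tens fun j => if ε j = 1 then Pp else Pm) * sumSite N A).trace
      = (S.card : ℂ) * c := by
    calc ∑ ε ∈ S, ((tens fun j => if ε j = 1 then Pp else Pm) * sumSite N A).trace
        = ∑ _ε ∈ S, c := Finset.sum_congr rfl fun ε hε => by
          rw [trace_tens_mul_sumSite _
            (fun k => by by_cases hk : ε k = 1 <;> simp [hk, hPp, hPm]) A]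
          exact hS ε hε
      _ = (S.card : ℂ) * c := by rw [Finset.sum_const]; simp [mul_comm]
  rw [hterm, ← mul_assoc, inv_mul_cancel₀ (Nat.cast_ne_zero.mpr hne.card_pos.ne'), one_mul]

lemma key (hv : Fin 3 → ℝ) (hh : 0 < norm3 hv) (e : ℝ)
    (he : e ∈ Set.Icc (-(norm3 hv)) (norm3 hv)) (α : Fin 3) (N : ℕ) :
    Matrix.trace (microState N hv e * sumSite N (pauli α)) =
      (((2 * (⌈((N : ℝ) * e / norm3 hv + N) / 2⌉ : ℤ) - N) * (hv α / norm3 hv) : ℝ) : ℂ) := by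
  obtain ⟨he1, he2⟩ := he
  set h : ℝ := norm3 hv with hhdef
  set x : ℝ := ((N : ℝ) * e / h + N) / 2 with hxdef
  set K : ℤ := ⌈x⌉ with hKdef
  have hhne : h ≠ 0 := hh.ne'
  -- bounds on K
  have hxK : x ≤ (K : ℝ) := Int.le_ceil x
  have hKx : (K : ℝ) < x + 1 := Int.ceil_lt_add_one x
  have hK0 : 0 ≤ K := Int.ceil_nonneg (by
    have : -1 ≤ e / h := by rw [neg_le, ← neg_div, div_le_one hh]; linarith
    have hN0 : (0:ℝ) ≤ (N:ℝ) := Nat.cast_nonneg N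
    have : (N:ℝ) * e / h = (N:ℝ) * (e / h) := by ring
    rw [hxdef, this]
    nlinarith)
  have hKN : K ≤ (N : ℤ) := by
    apply Int.ceil_le.mpr
    push_cast
    have : e / h ≤ 1 := (div_le_one hh).mpr he2
    have : (N:ℝ) * e / h ≤ N := by
      rw [mul_div_assoc]
      nlinarith [Nat.cast_nonneg (α := ℝ) N]
    linarith
  -- sum of signs in terms of count
  have hT : ∀ ε : Fin N → Fin 2, (∑ j, if ε j = 1 then h else -h)
      = (2 * ((∑ j, (ε j : ℕ) : ℕ) : ℝ) - N) * h := by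
    intro ε
    have hb : ∀ b : Fin 2, (if b = 1 then h else -h) = (2 * ((b : ℕ) : ℝ) - 1) * h := by
      rw [Fin.forall_fin_two]
      constructor <;> norm_num
    rw [Finset.sum_congr rfl fun j _ => hb (ε j), ← Finset.sum_mul]
    congr 1
    rw [Finset.sum_sub_distrib, ← Finset.mul_sum]
    push_cast
    simp
  -- the count is exactly K for members
  have hcnt : ∀ c : ℕ, (N : ℝ) * e ≤ (2 * c - N) * h → (2 * c - N) * h < 2 * h + N * e →
      (c : ℝ) = (K : ℝ) := by
    intro c h1 h2
    have hx1 : x ≤ (c : ℝ) := by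
      have : (N : ℝ) * e / h ≤ 2 * c - N := (div_le_iff₀ hh).mpr h1
      rw [hxdef]; linarith
    have hx2 : (c : ℝ) < x + 1 := by
      have h2' : 2 * (c:ℝ) - N < (2 * h + N * e) / h := (lt_div_iff₀ hh).mpr h2
      have : (2 * h + (N:ℝ) * e) / h = 2 + (N:ℝ) * e / h := by field_simp
      rw [this] at h2'
      rw [hxdef]; linarith
    have h3 : K ≤ (c : ℤ) := Int.ceil_le.mpr (by exact_mod_cast hx1)
    have h4 : (c : ℤ) ≤ K := by
      have hcK1 : (c : ℝ) < (K : ℝ) + 1 := lt_of_lt_of_le hx2 (by linarith)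
      have : (c : ℤ) < K + 1 := by exact_mod_cast hcK1
      omega
    exact_mod_cast le_antisymm h4 h3
  apply abstract_calc _ _ (tr_Pp hv h) (tr_Pm hv h) (pauli α)
  · -- hS
    intro ε hε
    obtain ⟨-, h1, h2⟩ := Finset.mem_filter.mp hε
    rw [hT ε] at h1 h2
    have hc : ((∑ j, (ε j : ℕ) : ℕ) : ℝ) = (K : ℝ) := hcnt _ h1 h2
    have hb2 : ∀ b : Fin 2, ((if b = 1 then (2 : ℂ)⁻¹ • (1 + (h : ℂ)⁻¹ • Hmat hv)
          else (2 : ℂ)⁻¹ • (1 - (h : ℂ)⁻¹ • Hmat hv)) * pauli α).trace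
        = (((2 * ((b : ℕ) : ℝ) - 1) * (hv α / h) : ℝ) : ℂ) := by
      rw [Fin.forall_fin_two]
      constructor
      · rw [if_neg (by decide), tr_Pm_pauli hv h α]
        push_cast [Fin.val_zero]; ring
      · rw [if_pos rfl, tr_Pp_pauli hv h α]
        push_cast [Fin.val_one]; ring
    rw [Finset.sum_congr rfl fun j _ => hb2 (ε j)]
    rw [← Complex.ofReal_sum]
    congr 1
    rw [← Finset.sum_mul, Finset.sum_sub_distrib, ← Finset.mul_sum]
    have hc' : (∑ j, ((ε j : ℕ) : ℝ)) = (K : ℝ) := by push_cast at hc; exact hc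
    rw [hc']
    simp [Finset.card_univ]
  · -- nonempty
    set k : ℕ := K.toNat with hkdef
    have hkK : (k : ℝ) = (K : ℝ) := by
      rw [hkdef]; exact_mod_cast congrArg (Int.cast : ℤ → ℝ) (Int.toNat_of_nonneg hK0)
    have hkN : k ≤ N := by rw [hkdef]; exact_mod_cast Int.toNat_le.mpr hKN
    set ε₀ : Fin N → Fin 2 := (fun j => if (j : ℕ) < k then 1 else 0) with hε₀
    have hcntk : (∑ j, (ε₀ j : ℕ)) = k := by
      simp only [hε₀, apply_ite (Fin.val : Fin 2 → ℕ), Fin.val_one, Fin.val_zero]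
      rw [Fin.sum_univ_eq_sum_range (fun i => if i < k then 1 else 0)]
      have : ∀ i, (if i < k then (1:ℕ) else 0) = if i ∈ Finset.range k then 1 else 0 := by
        intro i; simp [Finset.mem_range]
      rw [Finset.sum_congr rfl fun i _ => this i, Finset.sum_ite_mem]
      have : Finset.range N ∩ Finset.range k = Finset.range k := by
        ext i; simp [Finset.mem_range]; omega
      rw [this]
      simp
    refine ⟨ε₀, Finset.mem_filter.mpr ⟨Finset.mem_univ _, ?_, ?_⟩⟩ <;>
      rw [hT, hcntk, hkK]
    · have hd : (N : ℝ) * e / h ≤ 2 * (K:ℝ) - N := by rw [hxdef] at hxK; linarith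
      exact (div_le_iff₀ hh).mp hd
    · have hd : 2 * (K:ℝ) - N < (N:ℝ) * e / h + 2 := by rw [hxdef] at hKx; linarith
      have := mul_lt_mul_of_pos_right hd hh
      have heq : ((N:ℝ) * e / h + 2) * h = 2 * h + N * e := by field_simp; ring
      rw [heq] at this
      exact this


/-- **equilibrium magnetization in the microcanonical ensemble.** For
`e ∈ [e₋, e₊]`, the limit `m⃗_e = lim_N (1/N) Tr[P_e^N M⃗_N]` exists and equals `e h⃗/h²`. -/
theorem kac_microcanonical_magnetization
    (hv : Fin 3 → ℝ) (hhv : hv ≠ 0) (e : ℝ)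
    (he : e ∈ Set.Icc (-(norm3 hv)) (norm3 hv)) (α : Fin 3) :
    Filter.Tendsto (fun N : ℕ =>
      (N : ℝ)⁻¹ * (Matrix.trace (microState N hv e * sumSite N (pauli α))).re)
      Filter.atTop (nhds (e * hv α / (norm3 hv) ^ 2)) := by
  set h : ℝ := norm3 hv with hhdef
  have hh : 0 < h := by
    rw [hhdef, norm3]
    apply Real.sqrt_pos.mpr
    obtain ⟨i, hi⟩ := Function.ne_iff.mp hhv
    exact Finset.sum_pos' (fun i _ => sq_nonneg _) ⟨i, Finset.mem_univ i, pow_two_pos_of_ne_zero hi⟩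
  have hkey : ∀ N : ℕ, (Matrix.trace (microState N hv e * sumSite N (pauli α))).re
      = (2 * (⌈((N : ℝ) * e / h + N) / 2⌉ : ℤ) - N) * (hv α / h) := by
    intro N
    rw [key hv hh e he α N, Complex.ofReal_re]
  simp only [hkey]
  have hlim : Filter.Tendsto
      (fun N : ℕ => (N : ℝ)⁻¹ * (2 * (⌈((N : ℝ) * e / h + N) / 2⌉ : ℤ) - N))
      Filter.atTop (nhds (e / h)) := by
    have hconst : Filter.Tendsto (fun _ : ℕ => e / h) Filter.atTop (nhds (e / h)) :=
      tendsto_const_nhds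
    have hupper : Filter.Tendsto (fun N : ℕ => e / h + 2 / N) Filter.atTop (nhds (e / h)) := by
      simpa using hconst.add (tendsto_const_div_atTop_nhds_zero_nat 2)
    apply tendsto_of_tendsto_of_tendsto_of_le_of_le' hconst hupper
    · filter_upwards [Filter.eventually_ge_atTop 1] with N hN
      have hN0 : (0 : ℝ) < N := by exact_mod_cast hN
      have hc := Int.le_ceil (((N : ℝ) * e / h + N) / 2)
      have h1 : (N : ℝ) * (e / h) ≤ 2 * (⌈((N : ℝ) * e / h + N) / 2⌉ : ℤ) - N := by
        rw [← mul_div_assoc]; linarith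
      calc e / h = (N : ℝ)⁻¹ * ((N : ℝ) * (e / h)) := by field_simp
        _ ≤ _ := mul_le_mul_of_nonneg_left h1 (by positivity)
    · filter_upwards [Filter.eventually_ge_atTop 1] with N hN
      have hN0 : (0 : ℝ) < N := by exact_mod_cast hN
      have hc := Int.ceil_lt_add_one (((N : ℝ) * e / h + N) / 2)
      have h1 : 2 * ((⌈((N : ℝ) * e / h + N) / 2⌉ : ℤ) : ℝ) - N ≤ (N : ℝ) * (e / h) + 2 := by
        rw [← mul_div_assoc]; linarith
      have h2 : (N : ℝ)⁻¹ * ((N : ℝ) * (e / h) + 2) = e / h + 2 / N := by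
        field_simp
      have h3 := mul_le_mul_of_nonneg_left h1 (inv_nonneg.mpr hN0.le)
      rw [h2] at h3
      exact h3
  have := hlim.mul_const (hv α / h)
  have heq : e / h * (hv α / h) = e * hv α / h ^ 2 := by rw [div_mul_div_comm, ← pow_two]
  rw [heq] at this
  exact Filter.Tendsto.congr (fun N => by ring) this


end
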